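/- Let T > 0, θ ∈ [0,1) and C > 0, and let φ : [0,T) → [0,∞) be a Borel-measurable function satisfying φ(u) ≤ C (T − u)^{−θ} for all u ∈ [0,T). Choose η as follows: η = 0 if θ ∈ [0,1/2), and fix any η ∈ (2θ − 1, 1) if θ ∈ [1/2,1). Then there exists a constant C' > 0 such that for every n ≥ 1, ∑_{i=1}^{n} ∫_{t_{i-1}^η}^{t_i^η} ∫_{t_{i-1}^η}^{u} φ(s)² ds du ≤ C'/n, where t_i^η denotes the points of the η-net. -/

import Mathlib

open MeasureTheory Real

open intervalIntegral

/-- The η-net on `[0,T]` with `n + 1` knots: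
`t_i^η = T (1 - (1 - i/n)^{1/(1-η)})`. -/
noncomputable def tnet (T η : ℝ) (n i : ℕ) : ℝ :=
  T * (1 - (1 - (i : ℝ) / (n : ℝ)) ^ ((1 : ℝ) / (1 - η)))
open MeasureTheory Real intervalIntegral

section Helpers

/-- Integrability of `s ↦ K (T-s)^(-a)`. -/
private lemma gInt {T a K c d : ℝ} (h : a < 1 ∨ (0 < T - c ∧ 0 < T - d)) :
    IntervalIntegrable (fun s => K * (T - s) ^ (-a)) volume c d := by
  have base : IntervalIntegrable (fun x : ℝ => K * x ^ (-a)) volume (T - c) (T - d) := by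
    apply IntervalIntegrable.const_mul
    rcases h with h | ⟨h1, h2⟩
    · exact intervalIntegrable_rpow' (by linarith)
    · exact intervalIntegrable_rpow (Or.inr (Set.notMem_uIcc_of_lt h1 h2))
  have := base.comp_sub_left T
  simpa using this

/-- Value of `∫ K (T-s)^(-a)`. -/
private lemma gVal {T a K c d : ℝ} (ha1 : a ≠ 1) (h : a < 1 ∨ (c ≤ d ∧ d < T)) :
    (∫ s in c..d, K * (T - s) ^ (-a))
      = K * (((T - c) ^ (1 - a) - (T - d) ^ (1 - a)) / (1 - a)) := by
  have h1 : (∫ s in c..d, K * (T - s) ^ (-a))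
      = ∫ x in T - d..T - c, K * x ^ (-a) := by
    rw [← intervalIntegral.integral_comp_sub_left (fun x : ℝ => K * x ^ (-a)) T]
  rw [h1, intervalIntegral.integral_const_mul, integral_rpow ?side]
  case side =>
    rcases h with h | ⟨h1, h2⟩
    · exact Or.inl (by linarith)
    · refine Or.inr ⟨by intro hc; apply ha1; linarith [neg_injective hc], ?_⟩
      exact Set.notMem_uIcc_of_lt (by linarith) (by linarith)
  rw [show -a + 1 = 1 - a by ring]

end Helpers

section H2
variable {T a K : ℝ} {φ : ℝ → ℝ}

private lemma sqInt (hφm : Measurable φ) (hK : 0 ≤ K)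
    (hbound : ∀ s ∈ Set.Ico (0:ℝ) T, (φ s) ^ 2 ≤ K * (T - s) ^ (-a))
    {c d : ℝ} (h0c : 0 ≤ c) (hcd : c ≤ d) (hdT : d ≤ T) (ha : a < 1 ∨ d < T) :
    IntervalIntegrable (fun s => (φ s) ^ 2) volume c d := by
  have hg : IntervalIntegrable (fun s => K * (T - s) ^ (-a)) volume c d := by
    apply gInt
    rcases ha with ha | ha
    · exact Or.inl ha
    · exact Or.inr ⟨by linarith, by linarith⟩
  refine hg.mono_fun' ((hφm.pow_const 2).aestronglyMeasurable) ?_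
  have hmem := ae_restrict_mem (μ := volume) (measurableSet_Ioc (a := c) (b := d))
  rw [Set.uIoc_of_le hcd]
  have hTne : ∀ᵐ (u : ℝ) ∂(volume.restrict (Set.Ioc c d)), u ≠ T := by
    apply ae_restrict_of_ae
    rw [ae_iff]
    have : {u : ℝ | ¬ u ≠ T} = {T} := by ext u; simp
    rw [this]
    exact measure_singleton T
  filter_upwards [hmem, hTne] with s hs hsT
  have hs0 : (0:ℝ) ≤ s := le_trans h0c hs.1.le
  have hsT' : s < T := lt_of_le_of_ne (le_trans hs.2 hdT) hsT
  have hb := hbound s ⟨hs0, hsT'⟩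
  have : ‖(φ s)^2‖ = (φ s)^2 := by
    rw [Real.norm_eq_abs]; exact abs_of_nonneg (sq_nonneg _)
  simpa [this] using hb

private lemma inner_le (hφm : Measurable φ) (hK : 0 ≤ K)
    (hbound : ∀ s ∈ Set.Ico (0:ℝ) T, (φ s) ^ 2 ≤ K * (T - s) ^ (-a))
    {c u : ℝ} (h0c : 0 ≤ c) (hcu : c ≤ u) (huT : u < T) :
    (∫ s in c..u, (φ s) ^ 2) ≤ ∫ s in c..u, K * (T - s) ^ (-a) := by
  have hg : IntervalIntegrable (fun s => K * (T - s) ^ (-a)) volume c u :=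
    gInt (Or.inr ⟨by linarith, by linarith⟩)
  have hf : IntervalIntegrable (fun s => (φ s) ^ 2) volume c u :=
    sqInt hφm hK hbound h0c hcu (le_of_lt huT) (Or.inr huT)
  apply intervalIntegral.integral_mono_on hcu hf hg
  intro s hs
  exact hbound s ⟨le_trans h0c hs.1, lt_of_le_of_lt hs.2 huT⟩

private lemma primitive_aesm (hφm : Measurable φ) (c d : ℝ) :
    AEStronglyMeasurable (fun u => ∫ s in c..u, (φ s) ^ 2)
      (volume.restrict (Set.Ioc c d)) := by
  have hmeas : Measurable fun u =>
      (∫⁻ s in Set.Ioc c u, ENNReal.ofReal ((φ s) ^ 2)).toReal := by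
    apply ENNReal.measurable_toReal.comp
    apply Monotone.measurable
    intro u v huv
    exact lintegral_mono_set (Set.Ioc_subset_Ioc_right huv)
  refine hmeas.aestronglyMeasurable.congr ?_
  filter_upwards [ae_restrict_mem (μ := volume) measurableSet_Ioc] with u hu
  rw [intervalIntegral.integral_of_le hu.1.le]
  rw [MeasureTheory.integral_eq_lintegral_of_nonneg_ae
    (Filter.Eventually.of_forall (fun s => sq_nonneg (φ s)))
    ((hφm.pow_const 2).aestronglyMeasurable)]

private lemma term_le (hφm : Measurable φ) {c d : ℝ} (hcd : c ≤ d) (hdT : d ≤ T)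
    {B : ℝ → ℝ} (hB : IntervalIntegrable B volume c d)
    (hle : ∀ u, c ≤ u → u ≤ d → u < T → (∫ s in c..u, (φ s) ^ 2) ≤ B u) :
    (∫ u in c..d, ∫ s in c..u, (φ s) ^ 2) ≤ ∫ u in c..d, B u := by
  set f : ℝ → ℝ := fun u => ∫ s in c..u, (φ s) ^ 2 with hf_def
  have hTne : ∀ᵐ (u : ℝ) ∂(volume.restrict (Set.Ioc c d)), u ≠ T := by
    apply ae_restrict_of_ae
    rw [ae_iff]
    have : {u : ℝ | ¬ u ≠ T} = {T} := by ext u; simp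
    rw [this]; exact measure_singleton T
  have hmem := ae_restrict_mem (μ := volume) (measurableSet_Ioc (a := c) (b := d))
  have haeIoc : ∀ᵐ (u : ℝ) ∂(volume.restrict (Set.Ioc c d)), f u ≤ B u := by
    filter_upwards [hmem, hTne] with u hu huT
    exact hle u hu.1.le hu.2 (lt_of_le_of_ne (le_trans hu.2 hdT) huT)
  have hfnn : ∀ᵐ (u : ℝ) ∂(volume.restrict (Set.Ioc c d)), 0 ≤ f u := by
    filter_upwards [hmem] with u hu
    exact intervalIntegral.integral_nonneg hu.1.le (fun s _ => sq_nonneg _)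
  have hfint : IntervalIntegrable f volume c d := by
    rw [intervalIntegrable_iff, Set.uIoc_of_le hcd]
    have hBint : IntegrableOn B (Set.Ioc c d) volume := by
      have := hB.def'
      rwa [Set.uIoc_of_le hcd] at this
    refine hBint.mono' (primitive_aesm hφm c d) ?_
    filter_upwards [haeIoc, hfnn] with u h1 h2
    rw [Real.norm_eq_abs, abs_of_nonneg h2]; exact h1
  have haeIcc : ∀ᵐ (u : ℝ) ∂(volume.restrict (Set.Icc c d)), f u ≤ B u := by
    rwa [← Measure.restrict_congr_set Ioc_ae_eq_Icc]
  exact intervalIntegral.integral_mono_ae_restrict hcd hfint hB haeIcc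

end H2
section H3
variable {T a K : ℝ} {φ : ℝ → ℝ}

private lemma term_le_const (hφm : Measurable φ) (hK : 0 ≤ K)
    (hbound : ∀ s ∈ Set.Ico (0:ℝ) T, (φ s) ^ 2 ≤ K * (T - s) ^ (-a))
    {c d : ℝ} (h0c : 0 ≤ c) (hcd : c ≤ d) (hdT : d ≤ T) (ha : a < 1 ∨ d < T) :
    (∫ u in c..d, ∫ s in c..u, (φ s) ^ 2)
      ≤ (d - c) * ∫ s in c..d, K * (T - s) ^ (-a) := by
  set I : ℝ := ∫ s in c..d, K * (T - s) ^ (-a) with hI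
  have hgd : IntervalIntegrable (fun s => K * (T - s) ^ (-a)) volume c d := by
    apply gInt
    rcases ha with ha | ha
    · exact Or.inl ha
    · exact Or.inr ⟨by linarith, by linarith⟩
  have key : (∫ u in c..d, ∫ s in c..u, (φ s) ^ 2) ≤ ∫ _ in c..d, I := by
    apply term_le hφm hcd hdT (intervalIntegrable_const)
    intro u hcu hud huT
    have h1 : (∫ s in c..u, (φ s) ^ 2) ≤ ∫ s in c..u, K * (T - s) ^ (-a) :=
      inner_le hφm hK hbound h0c hcu huT
    have hgu : IntervalIntegrable (fun s => K * (T - s) ^ (-a)) volume c u :=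
      gInt (Or.inr ⟨by linarith, by linarith⟩)
    have hgud : IntervalIntegrable (fun s => K * (T - s) ^ (-a)) volume u d := by
      apply gInt
      rcases ha with ha | ha
      · exact Or.inl ha
      · exact Or.inr ⟨by linarith, by linarith⟩
    have hadd : (∫ s in c..u, K * (T - s) ^ (-a)) + (∫ s in u..d, K * (T - s) ^ (-a)) = I :=
      intervalIntegral.integral_add_adjacent_intervals hgu hgud
    have h2 : (0:ℝ) ≤ ∫ s in u..d, K * (T - s) ^ (-a) := by
      apply intervalIntegral.integral_nonneg hud
      intro s hs
      exact mul_nonneg hK (Real.rpow_nonneg (by linarith [hs.2]) _)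
    linarith
  simpa [smul_eq_mul] using key

private lemma term_le_tail (hφm : Measurable φ) (hK : 0 ≤ K)
    (hbound : ∀ s ∈ Set.Ico (0:ℝ) T, (φ s) ^ 2 ≤ K * (T - s) ^ (-a))
    (ha1 : 1 < a) (ha2 : a < 2)
    {c : ℝ} (h0c : 0 ≤ c) (hcT : c ≤ T) :
    (∫ u in c..T, ∫ s in c..u, (φ s) ^ 2)
      ≤ K / ((a - 1) * (2 - a)) * (T - c) ^ (2 - a) := by
  set B : ℝ → ℝ := fun u => (K / (a - 1)) * (T - u) ^ (-(a - 1)) with hB_def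
  have hBint : IntervalIntegrable B volume c T := gInt (Or.inl (by linarith))
  have key : (∫ u in c..T, ∫ s in c..u, (φ s) ^ 2) ≤ ∫ u in c..T, B u := by
    apply term_le hφm hcT le_rfl hBint
    intro u hcu huT' huT
    have h1 : (∫ s in c..u, (φ s) ^ 2) ≤ ∫ s in c..u, K * (T - s) ^ (-a) :=
      inner_le hφm hK hbound h0c hcu huT
    have h2 : (∫ s in c..u, K * (T - s) ^ (-a))
        = K * (((T - c) ^ (1 - a) - (T - u) ^ (1 - a)) / (1 - a)) :=
      gVal (by linarith) (Or.inr ⟨hcu, huT⟩)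
    have h3 : K * (((T - c) ^ (1 - a) - (T - u) ^ (1 - a)) / (1 - a)) ≤ B u := by
      show _ ≤ K / (a - 1) * (T - u) ^ (-(a - 1))
      have hTc : (0:ℝ) ≤ (T - c) ^ (1 - a) := Real.rpow_nonneg (by linarith) _
      have hab : -(a-1) = 1 - a := by ring
      rw [hab]
      have h4 : ((T - c) ^ (1 - a) - (T - u) ^ (1 - a)) / (1 - a)
          ≤ (T - u) ^ (1 - a) / (a - 1) := by
        have he : ((T - c) ^ (1 - a) - (T - u) ^ (1 - a)) / (1 - a)
            = ((T - u) ^ (1 - a) - (T - c) ^ (1 - a)) / (a - 1) := by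
          rw [div_eq_div_iff (by linarith) (by linarith)]; ring
        rw [he]
        apply div_le_div_of_nonneg_right ?_ (by linarith)
        · linarith
      calc K * (((T - c) ^ (1 - a) - (T - u) ^ (1 - a)) / (1 - a))
          ≤ K * ((T - u) ^ (1 - a) / (a - 1)) := by
            apply mul_le_mul_of_nonneg_left h4 hK
        _ = K / (a - 1) * (T - u) ^ (1 - a) := by ring
    linarith
  have hval : (∫ u in c..T, B u)
      = (K / (a-1)) * (((T - c) ^ (1 - (a-1)) - (T - T) ^ (1 - (a-1))) / (1 - (a-1))) :=
    gVal (by intro h; linarith [h]) (Or.inl (by linarith))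
  rw [hval] at key
  have hTT : (T - T) ^ (1 - (a - 1)) = 0 := by
    rw [sub_self]
    exact Real.zero_rpow (by intro h; linarith [h])
  rw [hTT] at key
  have : (K / (a-1)) * (((T - c) ^ (1 - (a-1)) - 0) / (1 - (a-1)))
      = K / ((a - 1) * (2 - a)) * (T - c) ^ (2 - a) := by
    rw [show (1 : ℝ) - (a - 1) = 2 - a by ring]
    rw [sub_zero]
    field_simp
  linarith
end H3
section H4

private lemma bern_delta {p x h : ℝ} (hp : 1 ≤ p) (h0 : 0 ≤ h) (hhx : h ≤ x) :
    x ^ p - (x - h) ^ p ≤ p * h * x ^ (p - 1) := by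
  rcases eq_or_lt_of_le (le_trans h0 hhx) with hx0 | hx0
  · have hx : x = 0 := hx0.symm
    have hh : h = 0 := le_antisymm (hx ▸ hhx) h0
    simp [hx, hh]
  · have ht1 : -(h / x) ≥ -1 := by
      rw [ge_iff_le, neg_le_neg_iff]
      exact (div_le_one hx0).mpr hhx
    have hb := one_add_mul_self_le_rpow_one_add (by linarith : (-1:ℝ) ≤ -(h/x)) hp
    -- hb : 1 + p * (-(h/x)) ≤ (1 + -(h/x)) ^ p
    have h1x : (1 : ℝ) + -(h / x) = (x - h) / x := by field_simp; ring
    rw [h1x] at hb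
    have hxh : (0:ℝ) ≤ (x - h) / x := div_nonneg (by linarith) hx0.le
    have hsplit : ((x - h) / x) ^ p * x ^ p = (x - h) ^ p := by
      rw [← Real.mul_rpow hxh hx0.le, div_mul_cancel₀ _ (ne_of_gt hx0)]
    have hxp : (0:ℝ) < x ^ p := Real.rpow_pos_of_pos hx0 _
    have hmul := mul_le_mul_of_nonneg_right hb hxp.le
    rw [hsplit] at hmul
    -- hmul : (1 + p * (-(h/x))) * x ^ p ≤ (x - h) ^ p
    have hxp1 : x ^ p / x = x ^ (p - 1) := by
      rw [Real.rpow_sub hx0, Real.rpow_one]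
    have : x ^ p - (x - h) ^ p ≤ p * (h / x) * x ^ p := by nlinarith
    calc x ^ p - (x - h) ^ p ≤ p * (h / x) * x ^ p := this
      _ = p * h * (x ^ p / x) := by ring
      _ = p * h * x ^ (p - 1) := by rw [hxp1]

private lemma bern_tel {r x : ℝ} (hr0 : 0 ≤ r) (hr1 : r ≤ 1) (hx : 1 ≤ x) :
    r * x ^ (r - 1) ≤ x ^ r - (x - 1) ^ r := by
  have hx0 : (0:ℝ) < x := by linarith
  have hb := rpow_one_add_le_one_add_mul_self (by
    rw [neg_le, neg_neg]
    exact (div_le_one hx0).mpr (by linarith) : (-1:ℝ) ≤ -(1/x)) hr0 hr1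
  -- hb : (1 + -(1/x)) ^ r ≤ 1 + r * (-(1/x))
  have h1x : (1 : ℝ) + -(1 / x) = (x - 1) / x := by field_simp; ring
  rw [h1x] at hb
  have hxr : (0:ℝ) < x ^ r := Real.rpow_pos_of_pos hx0 _
  have hmul := mul_le_mul_of_nonneg_right hb hxr.le
  have hsplit : ((x - 1) / x) ^ r * x ^ r = (x - 1) ^ r := by
    rw [← Real.mul_rpow (div_nonneg (by linarith) hx0.le) hx0.le,
      div_mul_cancel₀ _ (ne_of_gt hx0)]
  rw [hsplit] at hmul
  have hxp1 : x ^ r / x = x ^ (r - 1) := by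
    rw [Real.rpow_sub hx0, Real.rpow_one]
  have hexp : (1 + r * -(1 / x)) * x ^ r = x ^ r - r * (x ^ r / x) := by
    field_simp
    ring
  have : (x - 1) ^ r ≤ x ^ r - r * (x ^ r / x) := by rw [← hexp]; exact hmul
  rw [hxp1] at this
  linarith

private lemma sum_Icc_one {M : Type*} [AddCommMonoid M] (F : ℕ → M) (n : ℕ) :
    ∑ i ∈ Finset.Icc 1 n, F i = ∑ j ∈ Finset.range n, F (j + 1) := by
  induction n with
  | zero => simp
  | succ k ih =>
    rw [Finset.sum_range_succ, ← ih, Finset.sum_Icc_succ_top (Nat.le_add_left 1 k)]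

end H4

section H5

variable {T η : ℝ}

private lemma tnet_sub (T η : ℝ) (n i : ℕ) :
    T - tnet T η n i = T * (1 - (i : ℝ) / n) ^ ((1:ℝ)/(1-η)) := by
  unfold tnet; ring

private lemma tnet_zero (T η : ℝ) (n : ℕ) : tnet T η n 0 = 0 := by
  simp [tnet]

private lemma tnet_last (hη : η < 1) {n : ℕ} (hn : 1 ≤ n) : tnet T η n n = T := by
  unfold tnet
  have hn0 : (n:ℝ) ≠ 0 := Nat.cast_ne_zero.mpr (by omega)
  rw [div_self hn0, sub_self, Real.zero_rpow (ne_of_gt (one_div_pos.mpr (by linarith))), sub_zero, mul_one]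

private lemma p_ge_one (hη0 : 0 ≤ η) (hη1 : η < 1) : 1 ≤ (1:ℝ)/(1-η) := by
  rw [le_div_iff₀ (by linarith)]; linarith

private lemma tnet_mono (hT : 0 ≤ T) (hη0 : 0 ≤ η) (hη1 : η < 1) {n i j : ℕ}
    (hij : i ≤ j) (hjn : j ≤ n) : tnet T η n i ≤ tnet T η n j := by
  rcases Nat.eq_zero_or_pos n with rfl | hn
  · simp [tnet]
  unfold tnet
  apply mul_le_mul_of_nonneg_left _ hT
  have h1 : (0:ℝ) ≤ 1 - (j:ℝ)/n := by
    rw [sub_nonneg, div_le_one (by positivity)]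
    exact_mod_cast hjn
  have h2 : (1:ℝ) - (j:ℝ)/n ≤ 1 - (i:ℝ)/n := by
    have : (i:ℝ)/n ≤ (j:ℝ)/n := by
      apply div_le_div_of_nonneg_right ?_ (by positivity)
      · exact_mod_cast hij
    linarith
  have := Real.rpow_le_rpow h1 h2 (le_of_lt (one_div_pos.mpr (by linarith : (0:ℝ) < 1 - η)))
  linarith

private lemma tnet_nonneg (hT : 0 ≤ T) (hη0 : 0 ≤ η) (hη1 : η < 1) {n i : ℕ}
    (hin : i ≤ n) : 0 ≤ tnet T η n i := by
  have := tnet_mono hT hη0 hη1 (Nat.zero_le i) hin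
  rwa [tnet_zero] at this

private lemma tnet_le_T (hT : 0 ≤ T) (hη0 : 0 ≤ η) (hη1 : η < 1) {n i : ℕ}
    (hn : 1 ≤ n) (hin : i ≤ n) : tnet T η n i ≤ T := by
  have := tnet_mono hT hη0 hη1 hin le_rfl
  rwa [tnet_last hη1 hn] at this

private lemma tnet_delta (hT : 0 ≤ T) (hη0 : 0 ≤ η) (hη1 : η < 1) {n j : ℕ}
    (hjn : j + 1 ≤ n) :
    tnet T η n (j+1) - tnet T η n j
      ≤ T * ((1:ℝ)/(1-η)) / n * (1 - (j:ℝ)/n) ^ ((1:ℝ)/(1-η) - 1) := by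
  have hn : 1 ≤ n := le_trans (by omega) hjn
  have hn0 : (0:ℝ) < n := by positivity
  set p : ℝ := (1:ℝ)/(1-η) with hp_def
  have hp : 1 ≤ p := p_ge_one hη0 hη1
  set x : ℝ := 1 - (j:ℝ)/n with hx_def
  have hcast : ((j+1 : ℕ) : ℝ) = (j:ℝ) + 1 := by push_cast; ring
  have hy : 1 - ((j+1:ℕ):ℝ)/n = x - 1/n := by rw [hcast, hx_def]; field_simp; ring
  have hj1 : ((j:ℝ)+1)/n ≤ 1 := by
    rw [div_le_one hn0]
    exact_mod_cast hjn
  have hsum : (j:ℝ)/n + 1/(n:ℝ) = ((j:ℝ)+1)/n := by ring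
  have hhx : 1/(n:ℝ) ≤ x := by rw [hx_def]; linarith
  have hdelta := bern_delta hp (by positivity : (0:ℝ) ≤ 1/(n:ℝ)) hhx
  have hmul := mul_le_mul_of_nonneg_left hdelta hT
  unfold tnet
  rw [hy]
  have h1n : (1:ℝ)/(1-η) = p := hp_def.symm
  rw [h1n]
  have hxj : 1 - (j:ℝ)/n = x := hx_def.symm
  rw [hxj]
  calc T * (1 - (x - 1/(n:ℝ)) ^ p) - T * (1 - x ^ p)
      = T * (x ^ p - (x - 1/(n:ℝ)) ^ p) := by ring
    _ ≤ T * (p * (1/(n:ℝ)) * x ^ (p - 1)) := hmul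
    _ = T * p / (n:ℝ) * x ^ (p - 1) := by ring

end H5
section H6

private lemma rpow_sq {y e : ℝ} (hy : 0 ≤ y) : (y ^ e) ^ 2 = y ^ (2 * e) := by
  rw [← Real.rpow_natCast (y ^ e) 2, ← Real.rpow_mul hy]
  norm_num [mul_comm]

private lemma caseA {T a K : ℝ} (hT : 0 < T) (ha0 : a < 1) {φ : ℝ → ℝ}
    (hφm : Measurable φ) (hK : 0 ≤ K)
    (hbound : ∀ s ∈ Set.Ico (0:ℝ) T, (φ s) ^ 2 ≤ K * (T - s) ^ (-a))
    {n : ℕ} (hn : 1 ≤ n) :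
    ∑ i ∈ Finset.Icc 1 n,
        (∫ u in tnet T 0 n (i - 1)..tnet T 0 n i,
          (∫ s in tnet T 0 n (i - 1)..u, (φ s) ^ 2))
      ≤ T * (∫ s in (0:ℝ)..T, K * (T - s) ^ (-a)) / n := by
  have hη0 : (0:ℝ) ≤ 0 := le_rfl
  have hη1 : (0:ℝ) < 1 := one_pos
  have hnR : (0:ℝ) < n := by exact_mod_cast Nat.pos_of_ne_zero (by omega)
  have heta : ∀ i : ℕ, tnet T 0 n i = T * ((i:ℝ)/n) := by
    intro i
    unfold tnet
    rw [show (1:ℝ)/(1-0) = 1 by norm_num, Real.rpow_one]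
    ring
  rw [sum_Icc_one]
  simp only [Nat.add_sub_cancel]
  have hstep : ∀ j ∈ Finset.range n,
      (∫ u in tnet T 0 n j..tnet T 0 n (j+1), ∫ s in tnet T 0 n j..u, (φ s) ^ 2)
        ≤ (T/n) * ∫ s in tnet T 0 n j..tnet T 0 n (j+1), K * (T - s) ^ (-a) := by
    intro j hj
    have hj' : j + 1 ≤ n := Finset.mem_range.mp hj
    have h0c : 0 ≤ tnet T 0 n j := tnet_nonneg hT.le hη0 hη1 (by omega)
    have hcd : tnet T 0 n j ≤ tnet T 0 n (j+1) :=
      tnet_mono hT.le hη0 hη1 (Nat.le_succ j) hj'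
    have hdT : tnet T 0 n (j+1) ≤ T := tnet_le_T hT.le hη0 hη1 (by omega) hj'
    have hmain := term_le_const hφm hK hbound h0c hcd hdT (Or.inl ha0)
    have hdc : tnet T 0 n (j+1) - tnet T 0 n j = T/n := by
      rw [heta, heta]
      push_cast
      field_simp
      ring
    rwa [hdc] at hmain
  have hints : ∀ k < n, IntervalIntegrable (fun s => K * (T - s) ^ (-a)) volume
      (tnet T 0 n k) (tnet T 0 n (k+1)) := fun k _ => gInt (Or.inl ha0)
  calc ∑ j ∈ Finset.range n,
        (∫ u in tnet T 0 n j..tnet T 0 n (j+1), ∫ s in tnet T 0 n j..u, (φ s) ^ 2)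
      ≤ ∑ j ∈ Finset.range n,
          (T/n) * ∫ s in tnet T 0 n j..tnet T 0 n (j+1), K * (T - s) ^ (-a) :=
        Finset.sum_le_sum hstep
    _ = (T/n) * ∑ j ∈ Finset.range n,
          ∫ s in tnet T 0 n j..tnet T 0 n (j+1), K * (T - s) ^ (-a) :=
        (Finset.mul_sum _ _ _).symm
    _ = (T/n) * ∫ s in (tnet T 0 n 0)..(tnet T 0 n n), K * (T - s) ^ (-a) := by
        rw [intervalIntegral.sum_integral_adjacent_intervals hints]
    _ = T * (∫ s in (0:ℝ)..T, K * (T - s) ^ (-a)) / n := by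
        rw [tnet_zero, tnet_last hη1 hn]
        ring

end H6
section H7
set_option maxHeartbeats 1000000

private lemma caseB {T a K η : ℝ} (hT : 0 < T) (hη0 : 0 < η) (hη1 : η < 1)
    (ha1 : 1 < a) (haη : a < 1 + η) {φ : ℝ → ℝ}
    (hφm : Measurable φ) (hK : 0 ≤ K)
    (hbound : ∀ s ∈ Set.Ico (0:ℝ) T, (φ s) ^ 2 ≤ K * (T - s) ^ (-a))
    {n : ℕ} (hn : 1 ≤ n) :
    ∑ i ∈ Finset.Icc 1 n,
        (∫ u in tnet T η n (i - 1)..tnet T η n i,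
          (∫ s in tnet T η n (i - 1)..u, (φ s) ^ 2))
      ≤ (K * (T * ((1:ℝ)/(1-η))) ^ 2 * (2:ℝ) ^ (2 * ((1:ℝ)/(1-η)) - 2) * T ^ (-a)
            / (min ((2 - a) * ((1:ℝ)/(1-η))) (3/2) - 1)
          + K / ((a - 1) * (2 - a)) * T ^ (2 - a)) / n := by
  set p : ℝ := (1:ℝ)/(1-η) with hp_def
  have hp1 : 1 ≤ p := p_ge_one hη0.le hη1
  have ha2 : a < 2 := by linarith
  set q : ℝ := (2 - a) * p with hq_def
  have hq1 : 1 < q := by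
    rw [hq_def, hp_def]
    rw [show (2 - a) * ((1:ℝ)/(1-η)) = (2 - a)/(1-η) by ring]
    rw [lt_div_iff₀ (by linarith)]
    linarith
  set r : ℝ := min q (3/2) with hr_def
  have hr1 : 1 < r := lt_min hq1 (by norm_num)
  have hrq : r ≤ q := min_le_left _ _
  have hr32 : r ≤ 3/2 := min_le_right _ _
  set A : ℝ := K * (T * p) ^ 2 * (2:ℝ) ^ (2 * p - 2) * T ^ (-a) with hA_def
  have hA0 : 0 ≤ A := by
    apply mul_nonneg (mul_nonneg (mul_nonneg hK (by positivity)) (by positivity))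
    exact Real.rpow_nonneg hT.le _
  obtain ⟨m, rfl⟩ : ∃ m, n = m + 1 := ⟨n - 1, by omega⟩
  set nn : ℝ := ((m + 1 : ℕ) : ℝ) with hnn_def
  have hnR : (0:ℝ) < nn := by rw [hnn_def]; positivity
  have hnn1 : 1 ≤ nn := by rw [hnn_def]; exact_mod_cast Nat.succ_le_succ (Nat.zero_le m)
  have hnnm : nn = (m:ℝ) + 1 := by rw [hnn_def]; push_cast; ring
  rw [sum_Icc_one]
  simp only [Nat.add_sub_cancel]
  rw [Finset.sum_range_succ]
  -- tail term
  have htail : (∫ u in tnet T η (m+1) m..tnet T η (m+1) (m+1),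
        ∫ s in tnet T η (m+1) m..u, (φ s) ^ 2)
      ≤ K / ((a - 1) * (2 - a)) * T ^ (2 - a) / nn := by
    have hlast : tnet T η (m+1) (m+1) = T := tnet_last hη1 (by omega)
    rw [hlast]
    have h0c : 0 ≤ tnet T η (m+1) m := tnet_nonneg hT.le hη0.le hη1 (by omega)
    have hcT : tnet T η (m+1) m ≤ T := tnet_le_T hT.le hη0.le hη1 (by omega) (by omega)
    have h1 := term_le_tail hφm hK hbound ha1 ha2 h0c hcT
    have hsub : T - tnet T η (m+1) m = T * (1 - (m:ℝ)/nn) ^ p := tnet_sub T η (m+1) m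
    have hfrac : 1 - (m:ℝ)/nn = 1/nn := by
      rw [hnnm]; field_simp; ring
    have h2 : (T - tnet T η (m+1) m) ^ (2 - a) = T ^ (2 - a) * ((1/nn) ^ p) ^ (2 - a) := by
      rw [hsub, hfrac, Real.mul_rpow hT.le (Real.rpow_nonneg (by positivity) _)]
    have h3 : ((1/nn) ^ p) ^ (2 - a) = (1/nn) ^ q := by
      rw [← Real.rpow_mul (by positivity : (0:ℝ) ≤ 1/nn),
        show p * (2 - a) = q by rw [hq_def]; ring]
    have h4 : (1/nn) ^ q ≤ 1/nn := by
      rw [Real.div_rpow zero_le_one hnR.le, Real.one_rpow]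
      apply div_le_div_of_nonneg_left one_pos.le hnR ?_
      · calc nn = nn ^ (1:ℝ) := (Real.rpow_one nn).symm
          _ ≤ nn ^ q := Real.rpow_le_rpow_of_exponent_le hnn1 (by linarith)
    have hcoef : 0 ≤ K / ((a - 1) * (2 - a)) :=
      div_nonneg hK (by nlinarith)
    calc (∫ u in tnet T η (m+1) m..T, ∫ s in tnet T η (m+1) m..u, (φ s) ^ 2)
        ≤ K / ((a - 1) * (2 - a)) * (T - tnet T η (m+1) m) ^ (2 - a) := h1
      _ = K / ((a - 1) * (2 - a)) * (T ^ (2 - a) * ((1/nn) ^ q)) := by rw [h2, h3]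
      _ ≤ K / ((a - 1) * (2 - a)) * (T ^ (2 - a) * (1/nn)) := by
          apply mul_le_mul_of_nonneg_left _ hcoef
          exact mul_le_mul_of_nonneg_left h4 (Real.rpow_nonneg hT.le _)
      _ = K / ((a - 1) * (2 - a)) * T ^ (2 - a) / nn := by ring
  -- main terms
  have hstep : ∀ j ∈ Finset.range m,
      (∫ u in tnet T η (m+1) j..tnet T η (m+1) (j+1),
        ∫ s in tnet T η (m+1) j..u, (φ s) ^ 2)
        ≤ A/nn^2 * (((m - j : ℕ) : ℝ)/nn) ^ (r - 2) := by
    intro j hj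
    have hjm : j < m := Finset.mem_range.mp hj
    have h0c : 0 ≤ tnet T η (m+1) j := tnet_nonneg hT.le hη0.le hη1 (by omega)
    have hcd : tnet T η (m+1) j ≤ tnet T η (m+1) (j+1) :=
      tnet_mono hT.le hη0.le hη1 (Nat.le_succ j) (by omega)
    have hdT : tnet T η (m+1) (j+1) ≤ T := tnet_le_T hT.le hη0.le hη1 (by omega) (by omega)
    set w : ℝ := 1 - ((j + 1 : ℕ) : ℝ)/nn with hw_def
    have hwcast : w = 1 - ((j:ℝ) + 1)/nn := by rw [hw_def]; push_cast; ring
    have hw_lb : 1/nn ≤ w := by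
      rw [hwcast]
      have e2 : ((j:ℝ) + 1 + 1)/nn ≤ 1 := by
        rw [div_le_one hnR, hnnm]
        have : (j:ℝ) + 1 ≤ (m:ℝ) := by exact_mod_cast hjm
        linarith
      have e1 : ((j:ℝ) + 1)/nn + 1/nn = ((j:ℝ) + 1 + 1)/nn := by ring
      linarith
    have hwpos : 0 < w := lt_of_lt_of_le (by positivity) hw_lb
    have hw1 : w ≤ 1 := by
      rw [hwcast]
      have : 0 ≤ ((j:ℝ) + 1)/nn := by positivity
      linarith
    have hTd : T - tnet T η (m+1) (j+1) = T * w ^ p := tnet_sub T η (m+1) (j+1)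
    have hTwp : 0 < T * w ^ p := mul_pos hT (Real.rpow_pos_of_pos hwpos p)
    have hdT' : tnet T η (m+1) (j+1) < T := by linarith
    have t1 := term_le_const hφm hK hbound h0c hcd hdT (Or.inr hdT')
    have hgd : IntervalIntegrable (fun s => K * (T - s) ^ (-a)) volume
        (tnet T η (m+1) j) (tnet T η (m+1) (j+1)) :=
      gInt (Or.inr ⟨by linarith, by linarith⟩)
    have t2 : (∫ s in tnet T η (m+1) j..tnet T η (m+1) (j+1), K * (T - s) ^ (-a))
        ≤ (tnet T η (m+1) (j+1) - tnet T η (m+1) j) * (K * (T * w ^ p) ^ (-a)) := by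
      have hpt : ∀ s ∈ Set.Icc (tnet T η (m+1) j) (tnet T η (m+1) (j+1)),
          K * (T - s) ^ (-a) ≤ K * (T * w ^ p) ^ (-a) := by
        intro s hs
        apply mul_le_mul_of_nonneg_left _ hK
        exact Real.rpow_le_rpow_of_nonpos hTwp (by linarith [hs.2]) (by linarith)
      have := intervalIntegral.integral_mono_on hcd hgd intervalIntegrable_const hpt
      rwa [intervalIntegral.integral_const, smul_eq_mul] at this
    have hdc0 : 0 ≤ tnet T η (m+1) (j+1) - tnet T η (m+1) j := by linarith
    have hQ0 : 0 ≤ K * (T * w ^ p) ^ (-a) :=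
      mul_nonneg hK (Real.rpow_nonneg hTwp.le _)
    have t3 : (∫ u in tnet T η (m+1) j..tnet T η (m+1) (j+1),
          ∫ s in tnet T η (m+1) j..u, (φ s) ^ 2)
        ≤ (tnet T η (m+1) (j+1) - tnet T η (m+1) j)^2 * (K * (T * w ^ p) ^ (-a)) := by
      calc (∫ u in tnet T η (m+1) j..tnet T η (m+1) (j+1),
            ∫ s in tnet T η (m+1) j..u, (φ s) ^ 2)
          ≤ (tnet T η (m+1) (j+1) - tnet T η (m+1) j)
              * ∫ s in tnet T η (m+1) j..tnet T η (m+1) (j+1), K * (T - s) ^ (-a) := t1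
        _ ≤ (tnet T η (m+1) (j+1) - tnet T η (m+1) j)
              * ((tnet T η (m+1) (j+1) - tnet T η (m+1) j) * (K * (T * w ^ p) ^ (-a))) :=
            mul_le_mul_of_nonneg_left t2 hdc0
        _ = (tnet T η (m+1) (j+1) - tnet T η (m+1) j)^2 * (K * (T * w ^ p) ^ (-a)) := by
            ring
    set x : ℝ := 1 - (j:ℝ)/nn with hx_def
    have hdel : tnet T η (m+1) (j+1) - tnet T η (m+1) j ≤ T * p / nn * x ^ (p - 1) :=
      tnet_delta hT.le hη0.le hη1 (by omega)
    have hx0 : 0 ≤ x := by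
      rw [hx_def]
      have : (j:ℝ)/nn ≤ 1 := by
        rw [div_le_one hnR, hnnm]
        have : (j:ℝ) ≤ (m:ℝ) := by exact_mod_cast hjm.le
        linarith
      linarith
    have hj2 : (j:ℝ) + 2 ≤ nn := by
      rw [hnnm]
      exact_mod_cast (by omega : j + 2 ≤ m + 1)
    have hxnn : x * nn = nn - (j:ℝ) := by
      rw [hx_def]
      field_simp
    have hwnn : w * nn = nn - ((j:ℝ) + 1) := by
      rw [hwcast]
      field_simp
    have hxw : x ≤ 2 * w := by
      rw [← mul_le_mul_iff_of_pos_right hnR, show 2 * w * nn = 2 * (w * nn) by ring, hxnn, hwnn]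
      linarith
    have t4 : tnet T η (m+1) (j+1) - tnet T η (m+1) j ≤ T * p / nn * (2 * w) ^ (p - 1) := by
      calc tnet T η (m+1) (j+1) - tnet T η (m+1) j ≤ T * p / nn * x ^ (p - 1) := hdel
        _ ≤ T * p / nn * (2 * w) ^ (p - 1) := by
            apply mul_le_mul_of_nonneg_left
              (Real.rpow_le_rpow hx0 hxw (by linarith)) ?_
            · have : 0 < T * p := by positivity
              positivity
    have t5 : (∫ u in tnet T η (m+1) j..tnet T η (m+1) (j+1),
          ∫ s in tnet T η (m+1) j..u, (φ s) ^ 2)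
        ≤ (T * p / nn * (2 * w) ^ (p - 1))^2 * (K * (T * w ^ p) ^ (-a)) :=
      le_trans t3 (mul_le_mul_of_nonneg_right (pow_le_pow_left₀ hdc0 t4 2) hQ0)
    have hw2 : w ^ (2 * p - 2) * w ^ (p * (-a)) = w ^ (q - 2) := by
      rw [← Real.rpow_add hwpos]
      congr 1
      rw [hq_def]; ring
    have t6 : (T * p / nn * (2 * w) ^ (p - 1))^2 * (K * (T * w ^ p) ^ (-a))
        = A/nn^2 * w ^ (q - 2) := by
      rw [mul_pow, rpow_sq (by linarith : (0:ℝ) ≤ 2 * w),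
        Real.mul_rpow (by norm_num : (0:ℝ) ≤ 2) hwpos.le,
        Real.mul_rpow hT.le (Real.rpow_nonneg hwpos.le p),
        ← Real.rpow_mul hwpos.le p (-a), hA_def,
        show (2:ℝ) * (p - 1) = 2 * p - 2 by ring]
      linear_combination ((T * p / nn)^2 * (2:ℝ) ^ (2 * p - 2) * K * T ^ (-a)) * hw2
    have t7 : w ^ (q - 2) ≤ w ^ (r - 2) :=
      Real.rpow_le_rpow_of_exponent_ge hwpos hw1 (by linarith)
    have t8 : w = ((m - j : ℕ) : ℝ)/nn := by
      rw [hwcast]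
      have hc1 : ((m - j : ℕ) : ℝ) = (m:ℝ) - (j:ℝ) := by
        exact_mod_cast Nat.cast_sub hjm.le
      rw [hc1, hnnm]
      field_simp
      ring
    calc (∫ u in tnet T η (m+1) j..tnet T η (m+1) (j+1),
          ∫ s in tnet T η (m+1) j..u, (φ s) ^ 2)
        ≤ A/nn^2 * w ^ (q - 2) := t5.trans_eq t6
      _ ≤ A/nn^2 * w ^ (r - 2) :=
          mul_le_mul_of_nonneg_left t7 (div_nonneg hA0 (by positivity))
      _ = A/nn^2 * (((m - j : ℕ) : ℝ)/nn) ^ (r - 2) := by rw [← t8]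
  -- sum the main terms
  have hbern : ∀ k ∈ Finset.range m, (((k + 1 : ℕ) : ℝ)/nn) ^ (r - 2)
      ≤ nn ^ (2 - r)/(r - 1) * (((k + 1 : ℕ) : ℝ) ^ (r - 1) - ((k : ℕ) : ℝ) ^ (r - 1)) := by
    intro k _
    have hk1 : (1:ℝ) ≤ ((k + 1 : ℕ) : ℝ) := by exact_mod_cast Nat.succ_le_succ (Nat.zero_le k)
    have hb := bern_tel (by linarith : (0:ℝ) ≤ r - 1) (by linarith : r - 1 ≤ 1) hk1
    have hsubk : ((k + 1 : ℕ) : ℝ) - 1 = ((k : ℕ) : ℝ) := by push_cast; ring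
    rw [hsubk, show (r:ℝ) - 1 - 1 = r - 2 by ring] at hb
    have hinv : nn ^ (2 - r) * nn ^ (r - 2) = 1 := by
      rw [← Real.rpow_add hnR]
      norm_num
    have hdiv : (((k + 1 : ℕ) : ℝ)/nn) ^ (r - 2)
        = ((k + 1 : ℕ) : ℝ) ^ (r - 2) * nn ^ (2 - r) := by
      rw [Real.div_rpow (by positivity) hnR.le, div_eq_mul_inv,
        ← Real.rpow_neg hnR.le, show -(r - 2) = 2 - r by ring]
    rw [hdiv]
    have h9 : ((k + 1 : ℕ) : ℝ) ^ (r - 2)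
        ≤ (((k + 1 : ℕ) : ℝ) ^ (r - 1) - ((k : ℕ) : ℝ) ^ (r - 1))/(r - 1) := by
      rw [le_div_iff₀ (by linarith : (0:ℝ) < r - 1)]
      linarith [hb]
    calc ((k + 1 : ℕ) : ℝ) ^ (r - 2) * nn ^ (2 - r)
        ≤ ((((k + 1 : ℕ) : ℝ) ^ (r - 1) - ((k : ℕ) : ℝ) ^ (r - 1))/(r - 1)) * nn ^ (2 - r) :=
          mul_le_mul_of_nonneg_right h9 (Real.rpow_nonneg hnR.le _)
      _ = nn ^ (2 - r)/(r - 1) * (((k + 1 : ℕ) : ℝ) ^ (r - 1) - ((k : ℕ) : ℝ) ^ (r - 1)) := by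
          ring
  have hreflect : ∑ j ∈ Finset.range m, (((m - j : ℕ) : ℝ)/nn) ^ (r - 2)
      = ∑ k ∈ Finset.range m, (((k + 1 : ℕ) : ℝ)/nn) ^ (r - 2) := by
    rw [← Finset.sum_range_reflect (fun k => (((k + 1 : ℕ) : ℝ)/nn) ^ (r - 2)) m]
    apply Finset.sum_congr rfl
    intro j hj
    have hjm : j < m := Finset.mem_range.mp hj
    have : m - 1 - j + 1 = m - j := by omega
    rw [this]
  have hsum2 : ∑ k ∈ Finset.range m,
      (((k + 1 : ℕ) : ℝ) ^ (r - 1) - ((k : ℕ) : ℝ) ^ (r - 1))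
      = ((m : ℕ) : ℝ) ^ (r - 1) - ((0 : ℕ) : ℝ) ^ (r - 1) :=
    Finset.sum_range_sub (fun k => ((k : ℕ) : ℝ) ^ (r - 1)) m
  have hzero : ((0 : ℕ) : ℝ) ^ (r - 1) = 0 := by
    rw [Nat.cast_zero]
    exact Real.zero_rpow (by linarith)
  have hmr : ((m : ℕ) : ℝ) ^ (r - 1) ≤ nn ^ (r - 1) := by
    apply Real.rpow_le_rpow (Nat.cast_nonneg m) (by rw [hnnm]; linarith) (by linarith)
  have hS : ∑ k ∈ Finset.range m, (((k + 1 : ℕ) : ℝ)/nn) ^ (r - 2)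
      ≤ nn ^ (2 - r)/(r - 1) * nn ^ (r - 1) := by
    calc ∑ k ∈ Finset.range m, (((k + 1 : ℕ) : ℝ)/nn) ^ (r - 2)
        ≤ ∑ k ∈ Finset.range m, nn ^ (2 - r)/(r - 1)
            * (((k + 1 : ℕ) : ℝ) ^ (r - 1) - ((k : ℕ) : ℝ) ^ (r - 1)) :=
          Finset.sum_le_sum hbern
      _ = nn ^ (2 - r)/(r - 1) * ∑ k ∈ Finset.range m,
            (((k + 1 : ℕ) : ℝ) ^ (r - 1) - ((k : ℕ) : ℝ) ^ (r - 1)) :=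
          (Finset.mul_sum _ _ _).symm
      _ = nn ^ (2 - r)/(r - 1) * (((m : ℕ) : ℝ) ^ (r - 1) - ((0 : ℕ) : ℝ) ^ (r - 1)) := by
          rw [hsum2]
      _ ≤ nn ^ (2 - r)/(r - 1) * nn ^ (r - 1) := by
          apply mul_le_mul_of_nonneg_left _ (div_nonneg (Real.rpow_nonneg hnR.le _) (by linarith))
          rw [hzero]
          linarith
  have hmerge : nn ^ (2 - r) * nn ^ (r - 1) = nn := by
    rw [← Real.rpow_add hnR, show (2 - r) + (r - 1) = 1 by ring, Real.rpow_one]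
  have hmain : ∑ j ∈ Finset.range m,
      (∫ u in tnet T η (m+1) j..tnet T η (m+1) (j+1),
        ∫ s in tnet T η (m+1) j..u, (φ s) ^ 2)
      ≤ A/(r - 1)/nn := by
    calc ∑ j ∈ Finset.range m,
        (∫ u in tnet T η (m+1) j..tnet T η (m+1) (j+1),
          ∫ s in tnet T η (m+1) j..u, (φ s) ^ 2)
        ≤ ∑ j ∈ Finset.range m, A/nn^2 * (((m - j : ℕ) : ℝ)/nn) ^ (r - 2) :=
          Finset.sum_le_sum hstep
      _ = A/nn^2 * ∑ j ∈ Finset.range m, (((m - j : ℕ) : ℝ)/nn) ^ (r - 2) :=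
          (Finset.mul_sum _ _ _).symm
      _ = A/nn^2 * ∑ k ∈ Finset.range m, (((k + 1 : ℕ) : ℝ)/nn) ^ (r - 2) := by
          rw [hreflect]
      _ ≤ A/nn^2 * (nn ^ (2 - r)/(r - 1) * nn ^ (r - 1)) :=
          mul_le_mul_of_nonneg_left hS (div_nonneg hA0 (by positivity))
      _ = A/(r - 1)/nn := by
          rw [show A/nn^2 * (nn ^ (2 - r)/(r - 1) * nn ^ (r - 1))
              = A/(r - 1) * (nn ^ (2 - r) * nn ^ (r - 1))/nn^2 by ring, hmerge]
          rw [show A/(r - 1) * nn/nn^2 = A/(r - 1) * (nn/nn^2) by ring,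
            pow_two, ← div_div, div_self (ne_of_gt hnR)]
          ring
  have hsplit : (A/(r - 1) + K / ((a - 1) * (2 - a)) * T ^ (2 - a))/nn
      = A/(r - 1)/nn + K / ((a - 1) * (2 - a)) * T ^ (2 - a)/nn := by ring
  rw [hsplit]
  exact add_le_add hmain htail

end H7
/-- Lemma 5.4: for a Borel function `φ : [0,T) → [0,∞)` with
`φ(u) ≤ C (T-u)^{-θ}`, and `η` chosen according to `θ`, one has
`∑_{i=1}^n ∫_{t_{i-1}^η}^{t_i^η} ∫_{t_{i-1}^η}^u φ(s)² ds du ≤ C'/n`. -/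
theorem stmt0 (T θ C η : ℝ) (hT : 0 < T) (hθ0 : 0 ≤ θ) (hθ1 : θ < 1) (hC : 0 < C)
    (φ : ℝ → ℝ) (hφm : Measurable φ)
    (hφ0 : ∀ u ∈ Set.Ico (0 : ℝ) T, 0 ≤ φ u)
    (hφ : ∀ u ∈ Set.Ico (0 : ℝ) T, φ u ≤ C * (T - u) ^ (-θ))
    (hη : (θ < 1 / 2 ∧ η = 0) ∨ (1 / 2 ≤ θ ∧ 2 * θ - 1 < η ∧ η < 1)) :
    ∃ C' > 0, ∀ n : ℕ, 1 ≤ n →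
      ∑ i ∈ Finset.Icc 1 n,
        (∫ u in tnet T η n (i - 1)..tnet T η n i,
          (∫ s in tnet T η n (i - 1)..u, (φ s) ^ 2)) ≤ C' / n := by
  rcases hη with ⟨hθ2, hη0⟩ | ⟨hθ2, hη1, hη2⟩
  · -- equidistant case
    subst hη0
    set a : ℝ := 2 * θ with ha_def
    have ha0 : a < 1 := by rw [ha_def]; linarith
    set K : ℝ := C ^ 2 with hK_def
    have hK : 0 ≤ K := sq_nonneg C
    have hbound : ∀ s ∈ Set.Ico (0:ℝ) T, (φ s) ^ 2 ≤ K * (T - s) ^ (-a) := by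
      intro s hs
      have hTs : 0 < T - s := by linarith [hs.2]
      have h0 := hφ0 s hs
      have h1 := hφ s hs
      calc (φ s) ^ 2 ≤ (C * (T - s) ^ (-θ)) ^ 2 := pow_le_pow_left₀ h0 h1 2
        _ = C ^ 2 * ((T - s) ^ (-θ)) ^ 2 := by ring
        _ = K * (T - s) ^ (-a) := by
            rw [rpow_sq hTs.le, show (2:ℝ) * (-θ) = -a by rw [ha_def]; ring, hK_def]
    refine ⟨max (T * (∫ s in (0:ℝ)..T, K * (T - s) ^ (-a))) 1,
      lt_of_lt_of_le one_pos (le_max_right _ _), ?_⟩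
    intro n hn
    have hnpos : (0:ℝ) < n := by exact_mod_cast Nat.pos_of_ne_zero (by omega)
    exact le_trans (caseA hT ha0 hφm hK hbound hn)
      ((div_le_div_iff_of_pos_right hnpos).mpr (le_max_left _ _))
  · -- non-equidistant case
    have hη0' : 0 < η := by linarith
    set a : ℝ := max (2 * θ) (1 + η/2) with ha_def
    have h2θa : 2 * θ ≤ a := le_max_left _ _
    have ha1 : 1 < a := lt_of_lt_of_le (by linarith) (le_max_right _ _)
    have haη : a < 1 + η := max_lt (by linarith) (by linarith)
    set K : ℝ := C ^ 2 * T ^ (a - 2 * θ) with hK_def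
    have hK : 0 ≤ K := mul_nonneg (sq_nonneg C) (Real.rpow_nonneg hT.le _)
    have hbound : ∀ s ∈ Set.Ico (0:ℝ) T, (φ s) ^ 2 ≤ K * (T - s) ^ (-a) := by
      intro s hs
      have hTs : 0 < T - s := by linarith [hs.2]
      have hTsT : T - s ≤ T := by linarith [hs.1]
      have h0 := hφ0 s hs
      have h1 := hφ s hs
      have e1 : (φ s) ^ 2 ≤ C ^ 2 * (T - s) ^ (-(2 * θ)) := by
        calc (φ s) ^ 2 ≤ (C * (T - s) ^ (-θ)) ^ 2 := pow_le_pow_left₀ h0 h1 2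
          _ = C ^ 2 * ((T - s) ^ (-θ)) ^ 2 := by ring
          _ = C ^ 2 * (T - s) ^ (-(2 * θ)) := by
              rw [rpow_sq hTs.le, show (2:ℝ) * (-θ) = -(2 * θ) by ring]
      have e2 : (T - s) ^ (-(2 * θ)) = (T - s) ^ (a - 2 * θ) * (T - s) ^ (-a) := by
        rw [← Real.rpow_add hTs]
        congr 1
        ring
      have e3 : (T - s) ^ (a - 2 * θ) ≤ T ^ (a - 2 * θ) :=
        Real.rpow_le_rpow hTs.le hTsT (by linarith)
      calc (φ s) ^ 2 ≤ C ^ 2 * ((T - s) ^ (a - 2 * θ) * (T - s) ^ (-a)) := by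
            rw [← e2]; exact e1
        _ ≤ C ^ 2 * (T ^ (a - 2 * θ) * (T - s) ^ (-a)) := by
            apply mul_le_mul_of_nonneg_left _ (sq_nonneg C)
            exact mul_le_mul_of_nonneg_right e3 (Real.rpow_nonneg hTs.le _)
        _ = K * (T - s) ^ (-a) := by rw [hK_def]; ring
    refine ⟨max (K * (T * ((1:ℝ)/(1-η))) ^ 2 * (2:ℝ) ^ (2 * ((1:ℝ)/(1-η)) - 2) * T ^ (-a)
            / (min ((2 - a) * ((1:ℝ)/(1-η))) (3/2) - 1)
          + K / ((a - 1) * (2 - a)) * T ^ (2 - a)) 1,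
      lt_of_lt_of_le one_pos (le_max_right _ _), ?_⟩
    intro n hn
    have hnpos : (0:ℝ) < n := by exact_mod_cast Nat.pos_of_ne_zero (by omega)
    exact le_trans (caseB hT hη0' hη2 ha1 haη hφm hK hbound hn)
      ((div_le_div_iff_of_pos_right hnpos).mpr (le_max_left _ _))
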